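/- Let α_0, ..., α_{n-1} be a twofold set of n-th roots of a ∈ R with pairwise invertible differences, where n is a power of 2. Then for each i < n/2, α_{i+n/2} = -α_i. -/

import Mathlib

/-- `α 0, …, α (2^t - 1)` is a twofold set of `2^t`-th roots of `a`:
each `α i` is a `2^t`-th root of `a`, and `i ≡ j (mod 2^(t-k))` implies
`(α i)^(2^k) = (α j)^(2^k)` for every `0 ≤ k ≤ t`. -/
def IsTwofoldSet {R : Type*} [CommRing R] (t : ℕ) (α : ℕ → R) (a : R) : Prop :=
  (∀ i < 2 ^ t, α i ^ (2 ^ t) = a) ∧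
  ∀ k ≤ t, ∀ i < 2 ^ t, ∀ j < 2 ^ t,
    i ≡ j [MOD 2 ^ (t - k)] → α i ^ (2 ^ k) = α j ^ (2 ^ k)

theorem twofold_opposite {R : Type*} [CommRing R] {t : ℕ} {α : ℕ → R} {a : R}
    (htw : IsTwofoldSet t α a)
    (hinv : ∀ i < 2 ^ t, ∀ j < 2 ^ t, i ≠ j → IsUnit (α i - α j)) :
    ∀ i < 2 ^ t / 2, α (i + 2 ^ t / 2) = -α i := by
  intro i hi
  rcases Nat.eq_zero_or_pos t with ht | ht
  · subst ht; simp at hi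
  have h2t : 2 ^ t = 2 * 2 ^ (t - 1) := by
    rw [← pow_succ']; congr 1; omega
  have hm : 2 ^ t / 2 = 2 ^ (t - 1) := by omega
  rw [hm] at hi ⊢
  have hib : i < 2 ^ t := by omega
  have hjb : i + 2 ^ (t - 1) < 2 ^ t := by omega
  have hmod : i ≡ i + 2 ^ (t - 1) [MOD 2 ^ (t - 1)] := by
    unfold Nat.ModEq
    simp [Nat.add_mod]
  have hsq : α i ^ 2 = α (i + 2 ^ (t - 1)) ^ 2 := by
    have := htw.2 1 ht i hib (i + 2 ^ (t - 1)) hjb hmod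
    simpa using this
  have hne : i ≠ i + 2 ^ (t - 1) := by
    have : 0 < 2 ^ (t - 1) := Nat.pow_pos (by norm_num)
    omega
  have hu := hinv i hib (i + 2 ^ (t - 1)) hjb hne
  have hz : (α i - α (i + 2 ^ (t - 1))) * (α (i + 2 ^ (t - 1)) + α i) =
      (α i - α (i + 2 ^ (t - 1))) * 0 := by ring_nf; linear_combination hsq
  have := hu.mul_left_cancel hz
  linear_combination this
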